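/- arXiv:0711.4491 — 3 statements merged into one kernel-verified Lean document; each statement's English description precedes it below -/
import Mathlib

section
/- Let ξ ≥ 0 be a heavy-tailed random variable with distribution F, 0 < E ξ < ∞, and let τ be a counting random variable with E τ < ∞ and P(cτ > x) = o(\bar F(x)) as x → ∞ for some c > 0. Define the size-biased distributions F_*(dx) = x F(dx) / E ξ on [0,∞) and G_* as the distribution of c τ_* where P(τ_* = n) = n P(τ = n) / E τ. Then F_* is heavy-tailed and \bar G_*(x) = o(\bar F_*(x)) as x → ∞. -/
open MeasureTheory ProbabilityTheory Filter Real Set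
open scoped ENNReal

/-- **Size-biasing step in the proof of Theorem 1.** If `ξ ≥ 0` is heavy-tailed with
`0 < E ξ < ∞` and `P(cτ > x) = o(P(ξ > x))`, then the size-biased distribution `F⋆` of `ξ`
is heavy-tailed and the tail of the size-biased distribution `G⋆` of `cτ` satisfies
`Ḡ⋆(x) = o(F̄⋆(x))`. -/
theorem size_biased_heavy_and_littleo
    {Ω : Type*} [MeasurableSpace Ω] (P : Measure Ω) [IsProbabilityMeasure P]
    (ξ : Ω → ℝ) (τ : Ω → ℕ)
    (hξmeas : Measurable ξ) (hτmeas : Measurable τ)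
    (hξnonneg : ∀ ω, 0 ≤ ξ ω)
    (hheavy : ∀ ε > (0 : ℝ), ∫⁻ ω, ENNReal.ofReal (Real.exp (ε * ξ ω)) ∂P = ∞)
    (hξint : Integrable ξ P) (hξmean_pos : 0 < ∫ ω, ξ ω ∂P)
    (hτint : Integrable (fun ω => (τ ω : ℝ)) P)
    (c : ℝ) (hcpos : 0 < c)
    (hlittleo : (fun x => (P {ω | c * (τ ω : ℝ) > x}).toReal)
        =o[atTop] (fun x => (P {ω | ξ ω > x}).toReal))
    (Fstar : Measure ℝ)
    (hFstar : Fstar = (ENNReal.ofReal (∫ ω, ξ ω ∂P))⁻¹ •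
        (Measure.map ξ P).withDensity (fun x => ENNReal.ofReal x))
    (Gstar : Measure ℝ)
    (hGstar : Gstar = (ENNReal.ofReal (∫ ω, (τ ω : ℝ) ∂P))⁻¹ •
        Measure.map (fun ω => c * (τ ω : ℝ))
          (P.withDensity (fun ω => (τ ω : ℝ≥0∞)))) :
    (∀ ε > (0 : ℝ), ∫⁻ x, ENNReal.ofReal (Real.exp (ε * x)) ∂Fstar = ∞) ∧
      (fun x => (Gstar (Set.Ioi x)).toReal)
        =o[atTop] (fun x => (Fstar (Set.Ioi x)).toReal) := by
  set m : ℝ := ∫ ω, ξ ω ∂P with hm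
  set mτ : ℝ := ∫ ω, (τ ω : ℝ) ∂P with hmτdef
  have hτreal : Measurable fun ω => (τ ω : ℝ) := measurable_from_nat.comp hτmeas
  have hcτ : Measurable fun ω => c * (τ ω : ℝ) := measurable_const.mul hτreal
  have hSx : ∀ x : ℝ, MeasurableSet {ω | ξ ω > x} := fun x =>
    measurableSet_lt measurable_const hξmeas
  have hTx : ∀ x : ℝ, MeasurableSet {ω | c * (τ ω : ℝ) > x} := fun x =>
    measurableSet_lt measurable_const hcτ
  set B : ℝ → ℝ≥0∞ := fun x => ∫⁻ ω in {ω | ξ ω > x}, ENNReal.ofReal (ξ ω) ∂P with hBdef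
  have hBtot : ∫⁻ ω, ENNReal.ofReal (ξ ω) ∂P = ENNReal.ofReal m :=
    (ofReal_integral_eq_lintegral_ofReal hξint (ae_of_all _ hξnonneg)).symm
  have hBfin : ∀ x, B x ≠ ∞ := by
    intro x
    refine ne_top_of_le_ne_top ?_ (setLIntegral_le_lintegral _ _)
    rw [hBtot]; exact ENNReal.ofReal_ne_top
  have hFtail : ∀ x, Fstar (Set.Ioi x) = (ENNReal.ofReal m)⁻¹ * B x := by
    intro x
    rw [hFstar, Measure.smul_apply, smul_eq_mul,
      withDensity_apply _ measurableSet_Ioi,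
      setLIntegral_map measurableSet_Ioi ENNReal.measurable_ofReal hξmeas]
    rfl
  constructor
  · -- heavy-tailedness of Fstar
    intro ε hε
    have hexpm : Measurable fun x : ℝ => ENNReal.ofReal (Real.exp (ε * x)) :=
      ENNReal.measurable_ofReal.comp (Real.measurable_exp.comp (measurable_const.mul measurable_id))
    rw [hFstar, lintegral_smul_measure,
      lintegral_withDensity_eq_lintegral_mul _ ENNReal.measurable_ofReal hexpm]
    simp only [Pi.mul_apply]
    rw [lintegral_map (f := fun x : ℝ => ENNReal.ofReal x * ENNReal.ofReal (Real.exp (ε * x))) (ENNReal.measurable_ofReal.mul hexpm) hξmeas]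
    have hSmeas : MeasurableSet {ω | 1 ≤ ξ ω} := measurableSet_le measurable_const hξmeas
    have hSinf : ∫⁻ ω in {ω | 1 ≤ ξ ω}, ENNReal.ofReal (Real.exp (ε / 2 * ξ ω)) ∂P = ∞ := by
      by_contra h
      have hcompl : ∫⁻ ω in {ω | 1 ≤ ξ ω}ᶜ, ENNReal.ofReal (Real.exp (ε / 2 * ξ ω)) ∂P
          ≤ ENNReal.ofReal (Real.exp (ε / 2)) * P {ω | 1 ≤ ξ ω}ᶜ := by
        rw [← setLIntegral_const]
        refine setLIntegral_mono measurable_const ?_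
        intro ω hω
        have hω' : ξ ω < 1 := not_le.1 hω
        exact ENNReal.ofReal_le_ofReal (Real.exp_le_exp.2 (by nlinarith [hξnonneg ω]))
      have htot := hheavy (ε / 2) (by positivity)
      rw [← lintegral_add_compl (fun ω => ENNReal.ofReal (Real.exp (ε / 2 * ξ ω))) hSmeas] at htot
      have : (∫⁻ ω in {ω | 1 ≤ ξ ω}, ENNReal.ofReal (Real.exp (ε / 2 * ξ ω)) ∂P) +
          (∫⁻ ω in {ω | 1 ≤ ξ ω}ᶜ, ENNReal.ofReal (Real.exp (ε / 2 * ξ ω)) ∂P) ≠ ∞ := by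
        refine ENNReal.add_ne_top.2 ⟨h, ?_⟩
        exact ne_top_of_le_ne_top
          (ENNReal.mul_ne_top ENNReal.ofReal_ne_top (measure_ne_top _ _)) hcompl
      exact this htot
    have hinner : ∫⁻ ω, ENNReal.ofReal (ξ ω) * ENNReal.ofReal (Real.exp (ε * ξ ω)) ∂P = ∞ := by
      rw [eq_top_iff, ← hSinf]
      calc ∫⁻ ω in {ω | 1 ≤ ξ ω}, ENNReal.ofReal (Real.exp (ε / 2 * ξ ω)) ∂P
          ≤ ∫⁻ ω in {ω | 1 ≤ ξ ω}, ENNReal.ofReal (ξ ω) * ENNReal.ofReal (Real.exp (ε * ξ ω)) ∂P := by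
            refine setLIntegral_mono ((ENNReal.measurable_ofReal.comp hξmeas).mul
              (hexpm.comp hξmeas)) ?_
            intro ω hω
            have hω1 : (1 : ℝ) ≤ ξ ω := hω
            rw [← ENNReal.ofReal_mul (hξnonneg ω)]
            refine ENNReal.ofReal_le_ofReal ?_
            have h1 : Real.exp (ε / 2 * ξ ω) ≤ Real.exp (ε * ξ ω) :=
              Real.exp_le_exp.2 (by nlinarith)
            nlinarith [Real.exp_pos (ε * ξ ω)]
        _ ≤ ∫⁻ ω, ENNReal.ofReal (ξ ω) * ENNReal.ofReal (Real.exp (ε * ξ ω)) ∂P :=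
            setLIntegral_le_lintegral _ _
    rw [hinner, smul_eq_mul, ENNReal.mul_top (ENNReal.inv_ne_zero.2 ENNReal.ofReal_ne_top)]
  · -- little-o part
    by_cases hmτ0 : mτ = 0
    · have hae : (fun ω => (τ ω : ℝ)) =ᵐ[P] 0 :=
        (integral_eq_zero_iff_of_nonneg (fun ω => Nat.cast_nonneg _) hτint).1 hmτ0
      have hwd : P.withDensity (fun ω => (τ ω : ℝ≥0∞)) = 0 := by
        rw [show (fun ω => (τ ω : ℝ≥0∞)) = fun ω => ENNReal.ofReal (τ ω : ℝ) by
          funext ω; rw [ENNReal.ofReal_natCast]]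
        have hae2 : (fun ω => ENNReal.ofReal (τ ω : ℝ)) =ᵐ[P] (fun _ => 0) :=
          hae.mono fun ω hω => by
            simp only [Pi.zero_apply] at hω; simp [hω]
        rw [withDensity_congr_ae hae2]
        exact withDensity_zero
      have hG0 : (fun x => (Gstar (Set.Ioi x)).toReal) = fun _ => (0 : ℝ) := by
        funext x
        rw [hGstar, hwd]
        simp
      rw [hG0]
      exact Asymptotics.isLittleO_zero _ _
    · have hτnonneg : 0 ≤ mτ := integral_nonneg fun ω => Nat.cast_nonneg _
      have hmτpos : 0 < mτ := lt_of_le_of_ne hτnonneg (Ne.symm hmτ0)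
      set A : ℝ → ℝ≥0∞ := fun x => ∫⁻ ω in {ω | c * (τ ω : ℝ) > x}, (τ ω : ℝ≥0∞) ∂P with hAdef
      have hτtot : ∫⁻ ω, (τ ω : ℝ≥0∞) ∂P = ENNReal.ofReal mτ := by
        rw [hmτdef, ofReal_integral_eq_lintegral_ofReal hτint (ae_of_all _ fun ω => Nat.cast_nonneg _)]
        exact lintegral_congr fun ω => (ENNReal.ofReal_natCast _).symm
      have hAfin : ∀ x, A x ≠ ∞ := by
        intro x
        refine ne_top_of_le_ne_top ?_ (setLIntegral_le_lintegral _ _)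
        rw [hτtot]; exact ENNReal.ofReal_ne_top
      have hGtail : ∀ x, Gstar (Set.Ioi x) = (ENNReal.ofReal mτ)⁻¹ * A x := by
        intro x
        rw [hGstar, Measure.smul_apply, smul_eq_mul,
          Measure.map_apply hcτ measurableSet_Ioi,
          withDensity_apply _ (hcτ measurableSet_Ioi)]
        rfl
      -- layer cake for A
      have hAlayer : ∀ x : ℝ, A x = ∫⁻ t in Set.Ioi (0:ℝ),
          P {ω | t < Set.indicator {ω | c * (τ ω : ℝ) > x} (fun ω => (τ ω : ℝ)) ω} := by
        intro x
        have hind : (fun ω => ENNReal.ofReal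
            (Set.indicator {ω | c * (τ ω : ℝ) > x} (fun ω => (τ ω : ℝ)) ω))
            = fun ω => Set.indicator {ω | c * (τ ω : ℝ) > x} (fun ω => (τ ω : ℝ≥0∞)) ω := by
          funext ω
          by_cases hω : ω ∈ {ω | c * (τ ω : ℝ) > x}
          · simp [Set.indicator_of_mem hω, ENNReal.ofReal_natCast]
          · simp [Set.indicator_of_notMem hω]
        show (∫⁻ ω in {ω | c * (τ ω : ℝ) > x}, (τ ω : ℝ≥0∞) ∂P) = _
        rw [← lintegral_indicator (hTx x), ← hind,
          lintegral_eq_lintegral_meas_lt P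
            (ae_of_all _ fun ω => Set.indicator_nonneg (fun ω _ => Nat.cast_nonneg _) ω)
            ((hτreal.indicator (hTx x)).aemeasurable)]
      -- K1 : x * Tail x ≤ B x
      have hK1 : ∀ x : ℝ, 0 < x → ENNReal.ofReal x * P {ω | ξ ω > x} ≤ B x := by
        intro x hx
        calc ENNReal.ofReal x * P {ω | ξ ω > x}
            = ∫⁻ _ω in {ω | ξ ω > x}, ENNReal.ofReal x ∂P := (setLIntegral_const _ _).symm
          _ ≤ B x := setLIntegral_mono (ENNReal.measurable_ofReal.comp hξmeas)
              (fun ω hω => ENNReal.ofReal_le_ofReal (le_of_lt hω))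
      -- K2 : ∫_{Ioi x/c} Tail(ct) dt ≤ c⁻¹ * B x
      have hK2 : ∀ x : ℝ, 0 < x →
          (∫⁻ t in Set.Ioi (x / c), P {ω | ξ ω > c * t}) ≤ ENNReal.ofReal c⁻¹ * B x := by
        intro x hx
        set f : Ω → ℝ := Set.indicator {ω | ξ ω > x} (fun ω => c⁻¹ * ξ ω) with hfdef
        have hfnn : ∀ ω, 0 ≤ f ω :=
          fun ω => Set.indicator_nonneg (fun ω _ => mul_nonneg (by positivity) (hξnonneg ω)) ω
        have hfmeas : Measurable f := (measurable_const.mul hξmeas).indicator (hSx x)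
        have hset : ∀ t ∈ Set.Ioi (x / c), {ω | ξ ω > c * t} = {ω | t < f ω} := by
          intro t ht
          have htx : x < c * t := (div_lt_iff₀' hcpos).1 ht
          have ht0 : 0 < t := lt_trans (by positivity) ht
          ext ω
          simp only [Set.mem_setOf_eq]
          constructor
          · intro hξt
            have hωx : ω ∈ {ω | ξ ω > x} := lt_trans htx hξt
            show t < f ω
            rw [hfdef, Set.indicator_of_mem hωx, lt_inv_mul_iff₀ hcpos]
            exact hξt
          · intro hft
            by_cases hωx : ω ∈ {ω | ξ ω > x}
            · rw [hfdef, Set.indicator_of_mem hωx, lt_inv_mul_iff₀ hcpos] at hft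
              exact hft
            · rw [hfdef, Set.indicator_of_notMem hωx] at hft
              exact absurd hft (not_lt.2 ht0.le)
        calc (∫⁻ t in Set.Ioi (x / c), P {ω | ξ ω > c * t})
            = ∫⁻ t in Set.Ioi (x / c), P {ω | t < f ω} := by
              refine setLIntegral_congr_fun measurableSet_Ioi (fun t ht => ?_)
              rw [hset t ht]
          _ ≤ ∫⁻ t in Set.Ioi (0:ℝ), P {ω | t < f ω} := by
              refine lintegral_mono_set fun t ht => ?_
              exact lt_of_le_of_lt (by positivity : (0:ℝ) ≤ x / c) ht
          _ = ∫⁻ ω, ENNReal.ofReal (f ω) ∂P :=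
              (lintegral_eq_lintegral_meas_lt P (ae_of_all _ hfnn) hfmeas.aemeasurable).symm
          _ = ∫⁻ ω in {ω | ξ ω > x}, ENNReal.ofReal (c⁻¹ * ξ ω) ∂P := by
              rw [← lintegral_indicator (hSx x)]
              congr 1
              funext ω
              by_cases hω : ω ∈ {ω | ξ ω > x}
              · rw [hfdef]
                rw [Set.indicator_of_mem hω, Set.indicator_of_mem hω]
              · rw [hfdef]
                rw [Set.indicator_of_notMem hω, Set.indicator_of_notMem hω,
                  ENNReal.ofReal_zero]
          _ = ENNReal.ofReal c⁻¹ * B x := by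
              rw [hBdef]
              simp_rw [ENNReal.ofReal_mul (by positivity : (0:ℝ) ≤ c⁻¹)]
              exact lintegral_const_mul' _ _ ENNReal.ofReal_ne_top
      -- K3 : A x ≤ Tailτ x * (x * c⁻¹) + ∫_{Ioi x/c} Tailτ (ct)
      have hK3 : ∀ x : ℝ, 0 < x →
          A x ≤ P {ω | c * (τ ω : ℝ) > x} * ENNReal.ofReal (x / c)
            + ∫⁻ t in Set.Ioi (x / c), P {ω | c * (τ ω : ℝ) > c * t} := by
        intro x hx
        rw [hAlayer x, ← lintegral_indicator measurableSet_Ioi]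
        have hpt : ∀ t : ℝ, Set.indicator (Set.Ioi (0:ℝ))
            (fun t => P {ω | t < Set.indicator {ω | c * (τ ω : ℝ) > x} (fun ω => (τ ω : ℝ)) ω}) t
            ≤ Set.indicator (Set.Ioc (0:ℝ) (x / c)) (fun _ => P {ω | c * (τ ω : ℝ) > x}) t
              + Set.indicator (Set.Ioi (x / c)) (fun t => P {ω | c * (τ ω : ℝ) > c * t}) t := by
          intro t
          by_cases ht : t ∈ Set.Ioi (0:ℝ)
          · rw [Set.indicator_of_mem ht]
            have ht0 : 0 < t := ht
            by_cases htx : t ≤ x / c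
            · have h1 : {ω | t < Set.indicator {ω | c * (τ ω : ℝ) > x} (fun ω => (τ ω : ℝ)) ω}
                  ⊆ {ω | c * (τ ω : ℝ) > x} := by
                intro ω hω
                by_contra hnot
                rw [Set.mem_setOf_eq, Set.indicator_of_notMem hnot] at hω
                exact absurd hω (not_lt.2 ht0.le)
              have hmem : t ∈ Set.Ioc (0:ℝ) (x / c) := ⟨ht0, htx⟩
              rw [Set.indicator_of_mem hmem]
              exact le_add_right (measure_mono h1)
            · have hmem : t ∈ Set.Ioi (x / c) := lt_of_not_ge htx
              have h1 : {ω | t < Set.indicator {ω | c * (τ ω : ℝ) > x} (fun ω => (τ ω : ℝ)) ω}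
                  ⊆ {ω | c * (τ ω : ℝ) > c * t} := by
                intro ω hω
                rw [Set.mem_setOf_eq] at hω
                have hτt : t < (τ ω : ℝ) := lt_of_lt_of_le hω (Set.indicator_le_self' (fun ω _ => Nat.cast_nonneg _) ω)
                exact (mul_lt_mul_iff_right₀ hcpos).2 hτt
              rw [Set.indicator_of_mem hmem]
              exact le_add_left (measure_mono h1)
          · rw [Set.indicator_of_notMem ht]
            exact zero_le
        calc (∫⁻ t, Set.indicator (Set.Ioi (0:ℝ))
              (fun t => P {ω | t < Set.indicator {ω | c * (τ ω : ℝ) > x} (fun ω => (τ ω : ℝ)) ω}) t)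
            ≤ ∫⁻ t, (Set.indicator (Set.Ioc (0:ℝ) (x / c)) (fun _ => P {ω | c * (τ ω : ℝ) > x}) t
              + Set.indicator (Set.Ioi (x / c)) (fun t => P {ω | c * (τ ω : ℝ) > c * t}) t) :=
              lintegral_mono hpt
          _ = P {ω | c * (τ ω : ℝ) > x} * ENNReal.ofReal (x / c)
              + ∫⁻ t in Set.Ioi (x / c), P {ω | c * (τ ω : ℝ) > c * t} := by
              rw [lintegral_add_left (measurable_const.indicator measurableSet_Ioc),
                lintegral_indicator_const measurableSet_Ioc,
                lintegral_indicator measurableSet_Ioi, Real.volume_Ioc, sub_zero]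
      -- final assembly
      rw [Asymptotics.isLittleO_iff]
      intro ε hε
      have hmne : m ≠ 0 := ne_of_gt hξmean_pos
      have hmτne : mτ ≠ 0 := ne_of_gt hmτpos
      have hcne : c ≠ 0 := ne_of_gt hcpos
      set εc : ℝ := ε * c * mτ / (2 * m) with hεcdef
      have hεcpos : 0 < εc := by positivity
      obtain ⟨x₀, hx₀⟩ := eventually_atTop.mp (hlittleo.def hεcpos)
      have hbound : ∀ s, x₀ ≤ s →
          P {ω | c * (τ ω : ℝ) > s} ≤ ENNReal.ofReal εc * P {ω | ξ ω > s} := by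
        intro s hs
        have h := hx₀ s hs
        rw [Real.norm_of_nonneg ENNReal.toReal_nonneg,
          Real.norm_of_nonneg ENNReal.toReal_nonneg] at h
        calc P {ω | c * (τ ω : ℝ) > s}
            = ENNReal.ofReal ((P {ω | c * (τ ω : ℝ) > s}).toReal) :=
              (ENNReal.ofReal_toReal (measure_ne_top _ _)).symm
          _ ≤ ENNReal.ofReal (εc * (P {ω | ξ ω > s}).toReal) := ENNReal.ofReal_le_ofReal h
          _ = ENNReal.ofReal εc * P {ω | ξ ω > s} := by
              rw [ENNReal.ofReal_mul hεcpos.le, ENNReal.ofReal_toReal (measure_ne_top _ _)]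
      filter_upwards [eventually_ge_atTop (max x₀ 1)] with x hx
      have hx1 : (1:ℝ) ≤ x := le_trans (le_max_right _ _) hx
      have hxx₀ : x₀ ≤ x := le_trans (le_max_left _ _) hx
      have hxpos : 0 < x := lt_of_lt_of_le one_pos hx1
      have hTailAnti : Antitone fun s : ℝ => P {ω | ξ ω > s} := fun a b hab =>
        measure_mono fun ω hω => lt_of_le_of_lt hab hω
      have hAbound : A x ≤ 2 * (ENNReal.ofReal εc * ENNReal.ofReal c⁻¹ * B x) := by
        calc A x ≤ P {ω | c * (τ ω : ℝ) > x} * ENNReal.ofReal (x / c)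
              + ∫⁻ t in Set.Ioi (x / c), P {ω | c * (τ ω : ℝ) > c * t} := hK3 x hxpos
          _ ≤ (ENNReal.ofReal εc * P {ω | ξ ω > x}) * ENNReal.ofReal (x / c)
              + ∫⁻ t in Set.Ioi (x / c), ENNReal.ofReal εc * P {ω | ξ ω > c * t} := by
              refine add_le_add (mul_le_mul_left (hbound x hxx₀) _) ?_
              refine setLIntegral_mono
                (((hTailAnti.measurable).comp (measurable_const_mul c)).const_mul _) ?_
              intro t ht
              exact hbound (c * t) (le_of_lt (lt_of_le_of_lt hxx₀ ((div_lt_iff₀' hcpos).1 ht)))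
          _ ≤ ENNReal.ofReal εc * (ENNReal.ofReal c⁻¹ * B x)
              + ENNReal.ofReal εc * (ENNReal.ofReal c⁻¹ * B x) := by
              refine add_le_add ?_ ?_
              · rw [div_eq_mul_inv, ENNReal.ofReal_mul hxpos.le]
                calc ENNReal.ofReal εc * P {ω | ξ ω > x} * (ENNReal.ofReal x * ENNReal.ofReal c⁻¹)
                    = ENNReal.ofReal εc * (ENNReal.ofReal c⁻¹ *
                        (ENNReal.ofReal x * P {ω | ξ ω > x})) := by ring
                  _ ≤ ENNReal.ofReal εc * (ENNReal.ofReal c⁻¹ * B x) := by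
                      gcongr
                      exact hK1 x hxpos
              · rw [lintegral_const_mul' _ _ ENNReal.ofReal_ne_top]
                gcongr
                exact hK2 x hxpos
          _ = 2 * (ENNReal.ofReal εc * ENNReal.ofReal c⁻¹ * B x) := by ring
      rw [Real.norm_of_nonneg ENNReal.toReal_nonneg, Real.norm_of_nonneg ENNReal.toReal_nonneg,
        hGtail x, hFtail x]
      have hGval : ((ENNReal.ofReal mτ)⁻¹ * A x).toReal = mτ⁻¹ * (A x).toReal := by
        rw [ENNReal.toReal_mul, ENNReal.toReal_inv, ENNReal.toReal_ofReal hmτpos.le]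
      have hFval : ((ENNReal.ofReal m)⁻¹ * B x).toReal = m⁻¹ * (B x).toReal := by
        rw [ENNReal.toReal_mul, ENNReal.toReal_inv, ENNReal.toReal_ofReal hξmean_pos.le]
      rw [hGval, hFval]
      have hAle : (A x).toReal ≤ 2 * εc * c⁻¹ * (B x).toReal := by
        have h2 : (2 * (ENNReal.ofReal εc * ENNReal.ofReal c⁻¹ * B x)).toReal
            = 2 * εc * c⁻¹ * (B x).toReal := by
          rw [ENNReal.toReal_mul, ENNReal.toReal_mul, ENNReal.toReal_mul,
            ENNReal.toReal_ofReal hεcpos.le, ENNReal.toReal_ofReal (by positivity : (0:ℝ) ≤ c⁻¹),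
            ENNReal.toReal_ofNat]
          ring
        rw [← h2]
        refine ENNReal.toReal_mono ?_ hAbound
        exact ENNReal.mul_ne_top (by simp)
          (ENNReal.mul_ne_top (ENNReal.mul_ne_top ENNReal.ofReal_ne_top ENNReal.ofReal_ne_top)
            (hBfin x))
      calc mτ⁻¹ * (A x).toReal ≤ mτ⁻¹ * (2 * εc * c⁻¹ * (B x).toReal) := by gcongr
        _ = ε * (m⁻¹ * (B x).toReal) := by
            rw [hεcdef]
            field_simp
end

section
/- Let ξ, ξ_1, ξ_2, … be i.i.d. nonnegative random variables with common distribution F unbounded from the right, and let τ be an independent counting random variable. Then liminf_{x→∞} \bar{F^{*τ}}(x) / \bar F(x) ≥ E τ (with the convention that the inequality is trivially an equality when E τ = ∞). -/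
open MeasureTheory ProbabilityTheory Filter Real Set
open scoped ENNReal Topology

/-- Bonferroni-type inequality in additive form (no subtraction), relativized to an
event `B`. -/
private lemma bonferroni_aux {Ω : Type*} [MeasurableSpace Ω] (μ : Measure Ω)
    {B : Set Ω} (hB : MeasurableSet B) (A : ℕ → Set Ω) (hA : ∀ i, MeasurableSet (A i))
    (n : ℕ) :
    ∑ i ∈ Finset.range n, μ (B ∩ A i) ≤
      μ (B ∩ ⋃ i ∈ Finset.range n, A i) +
        ∑ i ∈ Finset.range n, ∑ j ∈ Finset.range i, μ (B ∩ A j ∩ A i) := by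
  induction n with
  | zero => simp
  | succ n ih =>
    have hU : (B ∩ ⋃ i ∈ Finset.range n, A i) ∪ (B ∩ A n)
        = B ∩ ⋃ i ∈ Finset.range (n + 1), A i := by
      rw [← inter_union_distrib_left]
      congr 1
      rw [Finset.range_add_one, Finset.set_biUnion_insert, union_comm]
    have h2 : μ ((B ∩ ⋃ i ∈ Finset.range n, A i) ∩ (B ∩ A n))
        ≤ ∑ j ∈ Finset.range n, μ (B ∩ A j ∩ A n) := by
      refine le_trans (measure_mono ?_) (measure_biUnion_finset_le _ _)
      intro ω hω
      obtain ⟨⟨hωB, hωU⟩, -, hωA⟩ := hω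
      simp only [Finset.mem_range, mem_iUnion, exists_prop] at hωU ⊢
      obtain ⟨j, hj, hωj⟩ := hωU
      exact ⟨j, hj, ⟨hωB, hωj⟩, hωA⟩
    calc ∑ i ∈ Finset.range (n + 1), μ (B ∩ A i)
        = ∑ i ∈ Finset.range n, μ (B ∩ A i) + μ (B ∩ A n) := Finset.sum_range_succ _ n
      _ ≤ (μ (B ∩ ⋃ i ∈ Finset.range n, A i)
            + ∑ i ∈ Finset.range n, ∑ j ∈ Finset.range i, μ (B ∩ A j ∩ A i))
            + μ (B ∩ A n) := add_le_add_left ih _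
      _ = (μ (B ∩ ⋃ i ∈ Finset.range n, A i) + μ (B ∩ A n))
            + ∑ i ∈ Finset.range n, ∑ j ∈ Finset.range i, μ (B ∩ A j ∩ A i) := by ring
      _ = (μ ((B ∩ ⋃ i ∈ Finset.range n, A i) ∪ (B ∩ A n))
            + μ ((B ∩ ⋃ i ∈ Finset.range n, A i) ∩ (B ∩ A n)))
            + ∑ i ∈ Finset.range n, ∑ j ∈ Finset.range i, μ (B ∩ A j ∩ A i) := by
          rw [measure_union_add_inter _ (hB.inter (hA n))]
      _ ≤ (μ (B ∩ ⋃ i ∈ Finset.range (n + 1), A i)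
            + ∑ j ∈ Finset.range n, μ (B ∩ A j ∩ A n))
            + ∑ i ∈ Finset.range n, ∑ j ∈ Finset.range i, μ (B ∩ A j ∩ A i) := by
          rw [hU]; exact add_le_add_left (add_le_add_right h2 _) _
      _ = μ (B ∩ ⋃ i ∈ Finset.range (n + 1), A i)
            + ∑ i ∈ Finset.range (n + 1), ∑ j ∈ Finset.range i, μ (B ∩ A j ∩ A i) := by
          rw [Finset.sum_range_succ
            (f := fun i => ∑ j ∈ Finset.range i, μ (B ∩ A j ∩ A i))]
          ring

/-- For i.i.d. nonnegative `ξ i` with distribution unbounded from the right and an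
independent counting random variable `τ`,
`liminf_{x→∞} P(S_τ > x)/P(ξ > x) ≥ E τ` (in `ℝ≥0∞`, so that the case `E τ = ∞` is
included). -/
theorem randomly_stopped_sums_liminf_ge
    {Ω : Type*} [MeasurableSpace Ω] (P : Measure Ω) [IsProbabilityMeasure P]
    (ξ : ℕ → Ω → ℝ) (τ : Ω → ℕ)
    (hξmeas : ∀ i, Measurable (ξ i)) (hτmeas : Measurable τ)
    (hξnonneg : ∀ i ω, 0 ≤ ξ i ω)
    (hident : ∀ i, IdentDistrib (ξ i) (ξ 0) P P)
    (hindep : iIndepFun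
      (Sum.elim ξ (fun _ ω => (τ ω : ℝ)) : ℕ ⊕ Unit → Ω → ℝ) P)
    (hunbounded : ∀ x : ℝ, 0 < P {ω | ξ 0 ω > x}) :
    ∫⁻ ω, (τ ω : ℝ≥0∞) ∂P ≤
      Filter.liminf (fun x : ℝ =>
        P {ω | (∑ i ∈ Finset.range (τ ω), ξ i ω) > x} / P {ω | ξ 0 ω > x}) atTop := by
  classical
  set p : ℝ → ℝ≥0∞ := fun x => P {ω | ξ 0 ω > x} with hpdef
  set q : ℝ → ℝ≥0∞ := fun x => P {ω | (∑ i ∈ Finset.range (τ ω), ξ i ω) > x} with hqdef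
  set A : ℝ → ℕ → Set Ω := fun x i => {ω | ξ i ω > x} with hAdef
  set B : ℕ → Set Ω := fun n => {ω | τ ω = n} with hBdef
  have hAmeas : ∀ x i, MeasurableSet (A x i) := fun x i => (hξmeas i) measurableSet_Ioi
  have hBmeas : ∀ n, MeasurableSet (B n) := fun n => hτmeas (measurableSet_singleton n)
  have hAeq : ∀ (i : ℕ) (x : ℝ), P (A x i) = p x := fun i x =>
    (hident i).measure_mem_eq (measurableSet_Ioi (a := x))
  have hτ'pre : ∀ n : ℕ, (fun ω => (τ ω : ℝ)) ⁻¹' {(n : ℝ)} = B n := by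
    intro n; ext ω; simp [hBdef, Nat.cast_inj]
  have hp_pos : ∀ x, p x ≠ 0 := fun x => (hunbounded x).ne'
  have hp_ne_top : ∀ x, p x ≠ ∞ := fun x => (measure_lt_top P _).ne
  have hp_tendsto : Tendsto p atTop (𝓝 0) := by
    have h0 : (⋂ x : ℝ, {ω | ξ 0 ω > x}) = ∅ := by
      ext ω
      simp only [mem_iInter, mem_setOf_eq, mem_empty_iff_false, iff_false, not_forall, not_lt]
      exact ⟨ξ 0 ω, le_refl _⟩
    have h := tendsto_measure_iInter_atTop (μ := P)
      (s := fun x : ℝ => {ω | ξ 0 ω > x})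
      (fun x => ((hξmeas 0) measurableSet_Ioi).nullMeasurableSet)
      (fun x y hxy ω hω => lt_of_le_of_lt hxy hω)
      ⟨0, (measure_lt_top P _).ne⟩
    rw [h0] at h
    simpa [hpdef, Function.comp_def] using h
  -- independence consequences
  have hpair : ∀ (n i : ℕ) (x : ℝ), P (B n ∩ A x i) = P (B n) * p x := by
    intro n i x
    have h := hindep.meas_biInter (S := ({Sum.inr (), Sum.inl i} : Finset (ℕ ⊕ Unit)))
      (s := fun k => Sum.elim (fun j => A x j) (fun _ => B n) k) ?_
    · rw [Finset.set_biInter_insert, Finset.set_biInter_singleton,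
        Finset.prod_insert (by simp), Finset.prod_singleton] at h
      simpa [hAeq i x] using h
    · rintro (j | u) hk
      · exact ⟨Ioi x, measurableSet_Ioi, rfl⟩
      · exact ⟨{(n : ℝ)}, measurableSet_singleton _, hτ'pre n⟩
  have htriple : ∀ (n i j : ℕ) (x : ℝ), j ≠ i →
      P (B n ∩ A x j ∩ A x i) = P (B n) * (p x * p x) := by
    intro n i j x hji
    have h := hindep.meas_biInter
      (S := ({Sum.inr (), Sum.inl j, Sum.inl i} : Finset (ℕ ⊕ Unit)))
      (s := fun k => Sum.elim (fun m => A x m) (fun _ => B n) k) ?_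
    · rw [Finset.set_biInter_insert, Finset.set_biInter_insert,
        Finset.set_biInter_singleton, Finset.prod_insert (by simp),
        Finset.prod_insert (by simp [hji]), Finset.prod_singleton] at h
      rw [inter_assoc]
      simpa [hAeq i x, hAeq j x, mul_assoc] using h
    · rintro (m | u) hk
      · exact ⟨Ioi x, measurableSet_Ioi, rfl⟩
      · exact ⟨{(n : ℝ)}, measurableSet_singleton _, hτ'pre n⟩
  -- union bound
  have hq_bound : ∀ (N : ℕ) (x : ℝ),
      ∑ n ∈ Finset.range N, P (B n ∩ ⋃ i ∈ Finset.range n, A x i) ≤ q x := by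
    intro N x
    have hd : Set.PairwiseDisjoint (↑(Finset.range N))
        (fun n => B n ∩ ⋃ i ∈ Finset.range n, A x i) := by
      intro a _ b _ hab
      refine Set.disjoint_left.2 fun ω hωa hωb => hab ?_
      have h1 : τ ω = a := hωa.1
      have h2 : τ ω = b := hωb.1
      rw [← h1, h2]
    have hm : ∀ n ∈ Finset.range N,
        MeasurableSet (B n ∩ ⋃ i ∈ Finset.range n, A x i) := fun n _ =>
      (hBmeas n).inter (MeasurableSet.biUnion (Finset.range n).countable_toSet
        (fun i _ => hAmeas x i))
    rw [← measure_biUnion_finset hd hm]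
    refine measure_mono fun ω hω => ?_
    simp only [mem_iUnion, exists_prop, Finset.mem_range] at hω
    obtain ⟨n, -, hτn, hU⟩ := hω
    simp only [mem_iUnion, exists_prop, Finset.mem_range] at hU
    obtain ⟨i, hi, hξi⟩ := hU
    have hτn' : τ ω = n := hτn
    have hξi' : x < ξ i ω := hξi
    show x < ∑ j ∈ Finset.range (τ ω), ξ j ω
    calc x < ξ i ω := hξi'
      _ ≤ ∑ j ∈ Finset.range (τ ω), ξ j ω := by
          rw [hτn']
          exact Finset.single_le_sum (fun j _ => hξnonneg j ω) (Finset.mem_range.2 hi)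
  -- master inequality
  have master : ∀ (N : ℕ) (x : ℝ),
      (∑ n ∈ Finset.range N, (n : ℝ≥0∞) * P (B n)) * p x ≤
        q x + ((N * N : ℕ) : ℝ≥0∞) * (p x * p x) := by
    intro N x
    have step1 : ∀ n : ℕ, (n : ℝ≥0∞) * P (B n) * p x
        = ∑ i ∈ Finset.range n, P (B n ∩ A x i) := by
      intro n
      simp only [hpair n _ x]
      rw [Finset.sum_const, Finset.card_range, nsmul_eq_mul, mul_assoc]
    have step3 : ∀ n, n < N →
        ∑ i ∈ Finset.range n, ∑ j ∈ Finset.range i, P (B n ∩ A x j ∩ A x i)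
        ≤ ((N * N : ℕ) : ℝ≥0∞) * (p x * p x) * P (B n) := by
      intro n hn
      have hterm : ∀ i ∈ Finset.range n, ∀ j ∈ Finset.range i,
          P (B n ∩ A x j ∩ A x i) = P (B n) * (p x * p x) := by
        intro i _ j hj
        exact htriple n i j x (Nat.ne_of_lt (Finset.mem_range.1 hj))
      calc ∑ i ∈ Finset.range n, ∑ j ∈ Finset.range i, P (B n ∩ A x j ∩ A x i)
          = ((∑ i ∈ Finset.range n, i : ℕ) : ℝ≥0∞) * (P (B n) * (p x * p x)) := by
            rw [Nat.cast_sum, Finset.sum_mul]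
            refine Finset.sum_congr rfl fun i hi => ?_
            rw [Finset.sum_congr rfl (hterm i hi), Finset.sum_const, Finset.card_range,
              nsmul_eq_mul]
        _ ≤ ((N * N : ℕ) : ℝ≥0∞) * (P (B n) * (p x * p x)) := by
            refine mul_le_mul_left (Nat.cast_le.2 ?_) _
            calc ∑ i ∈ Finset.range n, i
                ≤ ∑ _i ∈ Finset.range n, N := Finset.sum_le_sum
                  (fun i hi => le_of_lt (lt_of_lt_of_le (Finset.mem_range.1 hi) hn.le))
              _ = n * N := by rw [Finset.sum_const, Finset.card_range, smul_eq_mul]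
              _ ≤ N * N := Nat.mul_le_mul_right N hn.le
        _ = ((N * N : ℕ) : ℝ≥0∞) * (p x * p x) * P (B n) := by ring
    have hsum1 : ∑ n ∈ Finset.range N, P (B n) ≤ 1 := by
      have h := sum_measure_le_measure_univ (μ := P) (s := Finset.range N) (t := B)
        (fun n _ => (hBmeas n).nullMeasurableSet) ?_
      · simpa using h
      · intro a _ b _ hab
        refine (Set.disjoint_left.2 fun ω hωa hωb => hab ?_).aedisjoint
        have h1 : τ ω = a := hωa
        have h2 : τ ω = b := hωb
        rw [← h1, h2]
    calc (∑ n ∈ Finset.range N, (n : ℝ≥0∞) * P (B n)) * p x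
        = ∑ n ∈ Finset.range N, ∑ i ∈ Finset.range n, P (B n ∩ A x i) := by
          rw [Finset.sum_mul]; exact Finset.sum_congr rfl fun n _ => step1 n
      _ ≤ ∑ n ∈ Finset.range N, (P (B n ∩ ⋃ i ∈ Finset.range n, A x i)
            + ∑ i ∈ Finset.range n, ∑ j ∈ Finset.range i, P (B n ∩ A x j ∩ A x i)) :=
          Finset.sum_le_sum fun n _ => bonferroni_aux P (hBmeas n) (A x) (hAmeas x) n
      _ = (∑ n ∈ Finset.range N, P (B n ∩ ⋃ i ∈ Finset.range n, A x i))
            + ∑ n ∈ Finset.range N, ∑ i ∈ Finset.range n, ∑ j ∈ Finset.range i,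
                P (B n ∩ A x j ∩ A x i) := Finset.sum_add_distrib
      _ ≤ q x + ∑ n ∈ Finset.range N, ((N * N : ℕ) : ℝ≥0∞) * (p x * p x) * P (B n) :=
          add_le_add (hq_bound N x)
            (Finset.sum_le_sum fun n hn => step3 n (Finset.mem_range.1 hn))
      _ ≤ q x + ((N * N : ℕ) : ℝ≥0∞) * (p x * p x) := by
          refine add_le_add_right ?_ _
          rw [← Finset.mul_sum]
          calc ((N * N : ℕ) : ℝ≥0∞) * (p x * p x) * ∑ n ∈ Finset.range N, P (B n)
              ≤ ((N * N : ℕ) : ℝ≥0∞) * (p x * p x) * 1 := mul_le_mul_right hsum1 _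
            _ = ((N * N : ℕ) : ℝ≥0∞) * (p x * p x) := mul_one _
  -- rewrite the integral
  have hlint : ∫⁻ ω, (τ ω : ℝ≥0∞) ∂P = ∑' n : ℕ, (n : ℝ≥0∞) * P (B n) := by
    rw [← lintegral_map (f := fun n : ℕ => (n : ℝ≥0∞)) measurable_from_top hτmeas,
      lintegral_countable']
    refine tsum_congr fun n => ?_
    rw [Measure.map_apply hτmeas (measurableSet_singleton n)]
    congr 1
  rw [hlint, ENNReal.tsum_eq_iSup_nat]
  refine iSup_le fun N => ?_
  refine ENNReal.le_of_forall_pos_le_add fun ε hε _ => ?_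
  have hc : ((N * N : ℕ) : ℝ≥0∞) ≠ ∞ := ENNReal.natCast_ne_top _
  have hev : ∀ᶠ x in (atTop : Filter ℝ), ((N * N : ℕ) : ℝ≥0∞) * p x ≤ (ε : ℝ≥0∞) := by
    have h0 : Tendsto (fun x => ((N * N : ℕ) : ℝ≥0∞) * p x) atTop (𝓝 0) := by
      have h := ENNReal.Tendsto.const_mul hp_tendsto (Or.inr hc)
      simpa using h
    exact (h0.eventually_lt_const
      (by exact_mod_cast hε : (0 : ℝ≥0∞) < (ε : ℝ≥0∞))).mono fun x hx => hx.le
  have hev2 : ∀ᶠ x in (atTop : Filter ℝ),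
      (∑ n ∈ Finset.range N, (n : ℝ≥0∞) * P (B n)) - (ε : ℝ≥0∞) ≤ q x / p x := by
    filter_upwards [hev] with x hx
    have h1 : (∑ n ∈ Finset.range N, (n : ℝ≥0∞) * P (B n)) * p x
        ≤ q x + (ε : ℝ≥0∞) * p x := by
      refine (master N x).trans (add_le_add_right ?_ _)
      calc ((N * N : ℕ) : ℝ≥0∞) * (p x * p x)
          = (((N * N : ℕ) : ℝ≥0∞) * p x) * p x := by ring
        _ ≤ (ε : ℝ≥0∞) * p x := mul_le_mul_left hx _
    have h2 : (∑ n ∈ Finset.range N, (n : ℝ≥0∞) * P (B n)) ≤ q x / p x + (ε : ℝ≥0∞) := by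
      rw [← ENNReal.mul_le_mul_iff_left (hp_pos x) (hp_ne_top x), add_mul,
        ENNReal.div_mul_cancel (hp_pos x) (hp_ne_top x)]
      exact h1
    exact tsub_le_iff_right.2 h2
  have hfinal := Filter.le_liminf_of_le (by isBoundedDefault) hev2
  exact tsub_le_iff_right.1 hfinal
end

section
/- Let ξ, ξ_1, ξ_2, … be i.i.d. nonnegative random variables with common distribution F unbounded from the right, Laplace transform φ and γ̂ = sup{γ : φ(γ) < ∞} ∈ (0,∞] with φ(γ̂) ∈ (1,∞], and let τ be an independent counting random variable with E φ(γ̂)^τ < ∞. Define G(du) = e^{γ̂ u} F(du)/φ(γ̂) and ν with P(ν = k) = φ(γ̂)^k P(τ = k)/E φ(γ̂)^τ. Then liminf_{x→∞} \bar{G^{*ν}}(x)/\bar G(x) ≥ (1/E φ(γ̂)^{τ−1}) · liminf_{x→∞} \bar{F^{*τ}}(x)/\bar F(x). -/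
open MeasureTheory ProbabilityTheory Filter Real Set
open scoped ENNReal

section TiltedAux

variable {α β : Type*} [MeasurableSpace α] [MeasurableSpace β]

lemma my_prod_withDensity (μ : Measure α) (ν : Measure β) [SFinite μ] [SFinite ν]
    {f : α → ℝ≥0∞} {g : β → ℝ≥0∞} (hf : Measurable f) (hg : Measurable g) :
    (μ.withDensity f).prod (ν.withDensity g) =
      (μ.prod ν).withDensity (fun p => f p.1 * g p.2) := by
  ext s hs
  rw [Measure.prod_apply hs, withDensity_apply _ hs,
    lintegral_withDensity_eq_lintegral_mul _ hf (measurable_measure_prodMk_left hs)]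
  have hm : Measurable (s.indicator (fun p : α × β => f p.1 * g p.2)) :=
    (by fun_prop : Measurable fun p : α × β => f p.1 * g p.2).indicator hs
  rw [← lintegral_indicator hs, lintegral_prod _ hm.aemeasurable]
  congr 1
  ext x
  have : ∀ y, s.indicator (fun p => f p.1 * g p.2) (x, y)
      = f x * (Prod.mk x ⁻¹' s).indicator g y := by
    intro y
    by_cases hy : (x, y) ∈ s
    · simp [Set.indicator_of_mem hy, Set.indicator_of_mem (show y ∈ Prod.mk x ⁻¹' s from hy)]
    · simp [Set.indicator_of_notMem hy,
        Set.indicator_of_notMem (show y ∉ Prod.mk x ⁻¹' s from hy)]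
  simp only [Pi.mul_apply, this]
  rw [lintegral_const_mul _ (hg.indicator (measurable_prodMk_left hs)),
    withDensity_apply _ (measurable_prodMk_left hs), ← lintegral_indicator
      (measurable_prodMk_left hs)]

lemma my_map_withDensity_comp (μ : Measure α)
    {T : α → β} (hT : Measurable T) {g : β → ℝ≥0∞} (hg : Measurable g) :
    (μ.withDensity (g ∘ T)).map T = (μ.map T).withDensity g := by
  ext s hs
  rw [Measure.map_apply hT hs, withDensity_apply _ (hT hs), withDensity_apply _ hs,
    setLIntegral_map hs hg hT]
  rfl


lemma my_smul_prod (c : ℝ≥0∞) (μ : Measure α) (ν : Measure β) [SFinite μ] [SFinite ν] :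
    (c • μ).prod ν = c • (μ.prod ν) := by
  ext s hs
  rw [Measure.prod_apply hs, Measure.smul_apply, smul_eq_mul, Measure.prod_apply hs,
    lintegral_smul_measure, smul_eq_mul]

lemma my_prod_smul (c : ℝ≥0∞) (hc : c ≠ ⊤) (μ : Measure α) (ν : Measure β) [SFinite μ]
    [SFinite ν] : μ.prod (c • ν) = c • (μ.prod ν) := by
  ext s hs
  rw [Measure.prod_apply hs, Measure.smul_apply, smul_eq_mul, Measure.prod_apply hs]
  simp only [Measure.smul_apply, smul_eq_mul]
  rw [lintegral_const_mul' _ _ hc]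

lemma my_conv_smul_left (c : ℝ≥0∞) (μ ν : Measure ℝ) [SFinite μ] [SFinite ν] :
    (c • μ).conv ν = c • (μ.conv ν) := by
  unfold Measure.conv
  rw [my_smul_prod, Measure.map_smul]

lemma my_conv_smul_right (c : ℝ≥0∞) (hc : c ≠ ⊤) (μ ν : Measure ℝ) [SFinite μ] [SFinite ν] :
    μ.conv (c • ν) = c • (μ.conv ν) := by
  unfold Measure.conv
  rw [my_prod_smul c hc, Measure.map_smul]

lemma my_tilt_conv (γ : ℝ) (μ ν : Measure ℝ) [SFinite μ] [SFinite ν] :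
    ((μ.withDensity fun u => ENNReal.ofReal (Real.exp (γ * u))).conv
      (ν.withDensity fun u => ENNReal.ofReal (Real.exp (γ * u)))) =
      (μ.conv ν).withDensity fun u => ENNReal.ofReal (Real.exp (γ * u)) := by
  unfold Measure.conv
  have hE : Measurable fun u : ℝ => ENNReal.ofReal (Real.exp (γ * u)) := by fun_prop
  rw [my_prod_withDensity μ ν hE hE]
  have h1 : (fun p : ℝ × ℝ =>
        ENNReal.ofReal (Real.exp (γ * p.1)) * ENNReal.ofReal (Real.exp (γ * p.2)))
      = (fun u => ENNReal.ofReal (Real.exp (γ * u))) ∘ (fun p : ℝ × ℝ => p.1 + p.2) := by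
    funext p
    simp only [Function.comp_apply]
    rw [← ENNReal.ofReal_mul (Real.exp_pos _).le, ← Real.exp_add, mul_add]
  rw [h1, my_map_withDensity_comp _ (by fun_prop) (by fun_prop)]

lemma my_map_add_eq_conv {Ω : Type*} [MeasurableSpace Ω] (P : Measure Ω) [IsFiniteMeasure P]
    {X Y : Ω → ℝ} (hX : Measurable X) (hY : Measurable Y) (h : IndepFun X Y P) :
    Measure.map (fun ω => X ω + Y ω) P = (Measure.map X P).conv (Measure.map Y P) := by
  have hmap : Measure.map (fun ω => (X ω, Y ω)) P = (Measure.map X P).prod (Measure.map Y P) :=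
    (indepFun_iff_map_prod_eq_prod_map_map hX.aemeasurable hY.aemeasurable).1 h
  unfold Measure.conv
  rw [← hmap, Measure.map_map (by fun_prop) (by fun_prop)]
  rfl

lemma my_tilt_tail (γ : ℝ) (hγ : 0 < γ) (μ : Measure ℝ) (x : ℝ) :
    ∫⁻ u in Ioi x, ENNReal.ofReal (Real.exp (γ * u)) ∂μ
      = ∫⁻ t in Ioi (0:ℝ), μ (Ioi (max (Real.log t / γ) x)) := by
  rw [lintegral_eq_lintegral_meas_lt _ (Filter.Eventually.of_forall fun u => (Real.exp_pos _).le)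
    (by fun_prop)]
  refine setLIntegral_congr_fun measurableSet_Ioi (fun t ht => ?_)
  have hset : {a : ℝ | t < Real.exp (γ * a)} = Ioi (Real.log t / γ) := by
    ext u
    simp only [mem_setOf_eq, mem_Ioi]
    rw [div_lt_iff₀ hγ, mul_comm, Real.log_lt_iff_lt_exp ht]
  rw [hset, Measure.restrict_apply measurableSet_Ioi, Set.Ioi_inter_Ioi]

end TiltedAux

/-- **Exponential tilting inequality (Lemma 3 of [DFK]).** With `G` the `γ̂`-tilted
distribution of `F` and `ν` the tilted counting variable `P(ν = k) ∝ φ(γ̂)^k P(τ = k)`,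
one has `liminf Ḡ^{*ν}(x)/Ḡ(x) ≥ (E φ(γ̂)^{τ-1})⁻¹ · liminf F̄^{*τ}(x)/F̄(x)`. -/
theorem tilted_liminf_inequality
    {Ω : Type*} [MeasurableSpace Ω] (P : Measure Ω) [IsProbabilityMeasure P]
    (ξ : ℕ → Ω → ℝ) (τ : Ω → ℕ)
    (hξmeas : ∀ i, Measurable (ξ i)) (hτmeas : Measurable τ)
    (hξnonneg : ∀ i ω, 0 ≤ ξ i ω)
    (hident : ∀ i, IdentDistrib (ξ i) (ξ 0) P P)
    (hindep : iIndepFun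
      (Sum.elim ξ (fun _ ω => (τ ω : ℝ)) : ℕ ⊕ Unit → Ω → ℝ) P)
    (hunbounded : ∀ x : ℝ, 0 < P {ω | ξ 0 ω > x})
    (φ : ℝ → ℝ≥0∞)
    (hφ : φ = fun γ => ∫⁻ ω, ENNReal.ofReal (Real.exp (γ * ξ 0 ω)) ∂P)
    (γhat : ℝ) (hγhat : IsLUB {γ : ℝ | φ γ < ∞} γhat) (hγhat_pos : 0 < γhat)
    -- by monotone convergence, `φ(γ̂) = lim_{γ↑γ̂} φ γ` equals the value of `φ` at `γ̂`
    (φhat : ℝ≥0∞) (hφhat : φhat = φ γhat)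
    (hφhat_gt_one : 1 < φhat)
    (hτmom : ∫⁻ ω, φhat ^ (τ ω) ∂P < ∞)
    -- the tilted distribution `G(du) = e^{γ̂u} F(du) / φ(γ̂)`
    (G : Measure ℝ)
    (hG : G = φhat⁻¹ •
        (Measure.map (ξ 0) P).withDensity (fun u => ENNReal.ofReal (Real.exp (γhat * u))))
    -- the distribution of `ν`, `P(ν = k) = φ(γ̂)^k P(τ = k) / E φ(γ̂)^τ`
    (Pν : Measure ℕ)
    (hPν : Pν = (∫⁻ ω, φhat ^ (τ ω) ∂P)⁻¹ •
        Measure.map τ (P.withDensity (fun ω => φhat ^ (τ ω))))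
    -- convolution powers of `G`
    (Gpow : ℕ → Measure ℝ)
    (hGpow_zero : Gpow 0 = Measure.dirac (0 : ℝ))
    (hGpow_succ : ∀ n : ℕ, Gpow (n + 1) = (Gpow n).conv G) :
    (∫⁻ ω, φhat ^ (τ ω - 1) ∂P)⁻¹ *
        Filter.liminf (fun x : ℝ =>
          P {ω | (∑ i ∈ Finset.range (τ ω), ξ i ω) > x} / P {ω | ξ 0 ω > x}) atTop
      ≤ Filter.liminf (fun x : ℝ =>
          (∑' k : ℕ, Pν {k} * Gpow k (Set.Ioi x)) / G (Set.Ioi x)) atTop := by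
  classical
  by_cases hφtop : φhat = ⊤
  · -- degenerate case : `τ = 0` a.s., LHS is zero
    have hBmeas : MeasurableSet {ω | τ ω ≠ 0} := (hτmeas (measurableSet_singleton 0)).compl
    have hB : P {ω | τ ω ≠ 0} = 0 := by
      by_contra hB0
      have htop : (⊤ : ℝ≥0∞) ≤ ∫⁻ ω, φhat ^ (τ ω) ∂P := by
        calc (⊤ : ℝ≥0∞) = ⊤ * P {ω | τ ω ≠ 0} := by rw [ENNReal.top_mul hB0]
          _ = ∫⁻ _ in {ω | τ ω ≠ 0}, ⊤ ∂P := (setLIntegral_const _ _).symm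
          _ ≤ ∫⁻ ω in {ω | τ ω ≠ 0}, φhat ^ (τ ω) ∂P := by
              refine setLIntegral_mono (by fun_prop) fun ω hω => ?_
              rw [hφtop, ENNReal.top_pow hω]
          _ ≤ ∫⁻ ω, φhat ^ (τ ω) ∂P := setLIntegral_le_lintegral _ _
      exact absurd (lt_of_le_of_lt htop hτmom) (lt_irrefl _)
    have hzero : ∀ᶠ x : ℝ in atTop,
        (P {ω | (∑ i ∈ Finset.range (τ ω), ξ i ω) > x} / P {ω | ξ 0 ω > x}) = 0 := by
      filter_upwards [eventually_ge_atTop (0:ℝ)] with x hx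
      have hsub : {ω | (∑ i ∈ Finset.range (τ ω), ξ i ω) > x} ⊆ {ω | τ ω ≠ 0} := by
        intro ω hω h0
        rw [mem_setOf_eq, h0] at hω
        simp only [Finset.range_zero, Finset.sum_empty] at hω
        exact absurd (lt_of_le_of_lt hx hω) (lt_irrefl _)
      rw [measure_mono_null hsub hB, ENNReal.zero_div]
    have hlim0 : Filter.liminf (fun x : ℝ =>
        P {ω | (∑ i ∈ Finset.range (τ ω), ξ i ω) > x} / P {ω | ξ 0 ω > x}) atTop = 0 := by
      rw [Filter.liminf_congr hzero, Filter.liminf_const]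
    rw [hlim0, mul_zero]
    exact zero_le
  -- main case
  have hφ0 : φhat ≠ 0 := (zero_lt_one.trans hφhat_gt_one).ne'
  set E : ℝ → ℝ≥0∞ := fun u => ENNReal.ofReal (Real.exp (γhat * u)) with hE_def
  have hEmeas : Measurable E := by fun_prop
  set F : Measure ℝ := Measure.map (ξ 0) P with hF_def
  have hFprob : IsProbabilityMeasure F := Measure.isProbabilityMeasure_map (hξmeas 0).aemeasurable
  set S : ℕ → Ω → ℝ := fun k ω => ∑ i ∈ Finset.range k, ξ i ω with hS_def
  have hSmeas : ∀ k, Measurable (S k) := fun k => Finset.measurable_sum _ (fun i _ => hξmeas i)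
  set Fp : ℕ → Measure ℝ := fun k => Measure.map (S k) P with hFp_def
  have hFpprob : ∀ k, IsProbabilityMeasure (Fp k) :=
    fun k => Measure.isProbabilityMeasure_map (hSmeas k).aemeasurable
  have hfmeas : ∀ i, Measurable ((Sum.elim ξ (fun _ ω => (τ ω : ℝ)) : ℕ ⊕ Unit → Ω → ℝ) i) := by
    rintro (i | ⟨⟩)
    · exact hξmeas i
    · exact measurable_from_nat.comp hτmeas
  have hSum : ∀ k : ℕ, (∑ j ∈ (Finset.range k).map ⟨Sum.inl, Sum.inl_injective⟩,
      (Sum.elim ξ (fun _ ω => (τ ω : ℝ)) : ℕ ⊕ Unit → Ω → ℝ) j) = S k := by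
    intro k
    funext ω
    rw [Finset.sum_apply, Finset.sum_map]
    rfl
  have hindepSξ : ∀ n : ℕ, IndepFun (S n) (ξ n) P := by
    intro n
    have h := hindep.indepFun_finsetSum_of_notMem hfmeas
      (s := (Finset.range n).map ⟨Sum.inl, Sum.inl_injective⟩) (i := Sum.inl n) (by simp)
    rwa [hSum n] at h
  have hindepSτ : ∀ k : ℕ, IndepFun (S k) (fun ω => (τ ω : ℝ)) P := by
    intro k
    have h := hindep.indepFun_finsetSum_of_notMem hfmeas
      (s := (Finset.range k).map ⟨Sum.inl, Sum.inl_injective⟩) (i := Sum.inr ()) (by simp)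
    rwa [hSum k] at h
  have hFp0 : Fp 0 = Measure.dirac 0 := by
    have h0 : S 0 = fun _ => (0:ℝ) := by funext ω; simp [hS_def]
    rw [hFp_def]
    simp only [h0, Measure.map_const, measure_univ, one_smul]
  have hFmap : ∀ n, Measure.map (ξ n) P = F := fun n => (hident n).map_eq
  have hFpsucc : ∀ n, Fp (n+1) = (Fp n).conv F := by
    intro n
    have hadd : S (n+1) = fun ω => S n ω + ξ n ω := by
      funext ω; simp [hS_def, Finset.sum_range_succ]
    show Measure.map (S (n+1)) P = _
    rw [hadd, my_map_add_eq_conv P (hSmeas n) (hξmeas n) (hindepSξ n), hFmap n]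
  have hφhatF : φhat = ∫⁻ u, E u ∂F := by
    rw [hφhat, hφ]
    exact (lintegral_map hEmeas (hξmeas 0)).symm
  -- mass of tilted convolution powers
  have hmass : ∀ k, ∫⁻ u, E u ∂(Fp k) = φhat ^ k := by
    intro k
    induction k with
    | zero => rw [hFp0, lintegral_dirac' _ hEmeas]; simp [hE_def]
    | succ n ih =>
      rw [hFpsucc n]
      unfold Measure.conv
      rw [lintegral_map hEmeas (by fun_prop)]
      have hsplit : ∀ p : ℝ × ℝ, E (p.1 + p.2) = E p.1 * E p.2 := by
        intro p
        simp only [hE_def]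
        rw [← ENNReal.ofReal_mul (Real.exp_pos _).le, ← Real.exp_add, mul_add]
      simp only [hsplit]
      rw [lintegral_prod_mul hEmeas.aemeasurable hEmeas.aemeasurable, ih, ← hφhatF, pow_succ]
  -- Gpow in terms of tilted Fp
  have hGpow : ∀ k, Gpow k = (φhat⁻¹) ^ k • (Fp k).withDensity E := by
    intro k
    induction k with
    | zero =>
      rw [hGpow_zero, hFp0, pow_zero, one_smul]
      ext s hs
      rw [withDensity_apply _ hs, setLIntegral_dirac' hEmeas hs]
      have hE0 : E 0 = 1 := by simp [hE_def]
      rw [hE0, Measure.dirac_apply' _ hs]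
      by_cases h0 : (0:ℝ) ∈ s <;> simp [h0]
    | succ n ih =>
      rw [hGpow_succ n, ih, hG, hE_def, my_conv_smul_left,
        my_conv_smul_right _ (ENNReal.inv_ne_top.2 hφ0), my_tilt_conv,
        ← hFpsucc n, smul_smul, ← pow_succ]
  -- basic constants
  set c : ℝ≥0∞ := ∫⁻ ω, φhat ^ (τ ω) ∂P with hc_def
  have hcne : c ≠ ⊤ := hτmom.ne
  have hc1 : (1:ℝ≥0∞) ≤ c := by
    rw [hc_def]
    calc (1:ℝ≥0∞) = ∫⁻ _, 1 ∂P := by simp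
      _ ≤ _ := lintegral_mono fun ω => by
          simpa using pow_le_pow_left' hφhat_gt_one.le (τ ω)
  have hc0 : c ≠ 0 := (lt_of_lt_of_le zero_lt_one hc1).ne'
  set K : ℝ≥0∞ := φhat * c⁻¹ with hK_def
  have hK0 : K ≠ 0 := mul_ne_zero hφ0 (ENNReal.inv_ne_zero.2 hcne)
  have hKtop : K ≠ ⊤ := ENNReal.mul_ne_top hφtop (ENNReal.inv_ne_top.2 hc0)
  -- the point masses of `Pν`
  have hPνk : ∀ k : ℕ, Pν {k} = c⁻¹ * (φhat ^ k * P (τ ⁻¹' {k})) := by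
    intro k
    rw [hPν, Measure.smul_apply, smul_eq_mul,
      Measure.map_apply hτmeas (measurableSet_singleton k),
      withDensity_apply _ (hτmeas (measurableSet_singleton k))]
    congr 1
    rw [setLIntegral_congr_fun (hτmeas (measurableSet_singleton k))
        (fun ω hω => by rw [show τ ω = k from hω]),
      setLIntegral_const]
  -- tails
  have hGIoi : ∀ x : ℝ, G (Set.Ioi x) = φhat⁻¹ * ∫⁻ u in Ioi x, E u ∂F := by
    intro x
    rw [hG, Measure.smul_apply, smul_eq_mul, withDensity_apply _ measurableSet_Ioi]
  have hGpowIoi : ∀ (k : ℕ) (x : ℝ),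
      Gpow k (Set.Ioi x) = (φhat⁻¹) ^ k * ∫⁻ u in Ioi x, E u ∂(Fp k) := by
    intro k x
    rw [hGpow k, Measure.smul_apply, smul_eq_mul, withDensity_apply _ measurableSet_Ioi]
  have hFden : ∀ x : ℝ, P {ω | ξ 0 ω > x} = F (Set.Ioi x) := by
    intro x
    rw [hF_def, Measure.map_apply (hξmeas 0) measurableSet_Ioi]
    rfl
  have hF0 : ∀ x : ℝ, F (Set.Ioi x) ≠ 0 := fun x => by
    rw [← hFden x]; exact (hunbounded x).ne'
  have hTF_netop : ∀ x : ℝ, (∫⁻ u in Ioi x, E u ∂F) ≠ ⊤ := by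
    intro x
    refine ne_top_of_le_ne_top hφtop ?_
    rw [hφhatF]
    exact setLIntegral_le_lintegral _ _
  have hTF_pos : ∀ x : ℝ, (∫⁻ u in Ioi x, E u ∂F) ≠ 0 := by
    intro x h0
    have hlb : ENNReal.ofReal (Real.exp (γhat * x)) * F (Set.Ioi x)
        ≤ ∫⁻ u in Ioi x, E u ∂F := by
      rw [← setLIntegral_const]
      refine setLIntegral_mono hEmeas fun u hu => ?_
      exact ENNReal.ofReal_le_ofReal (Real.exp_le_exp.2
        (mul_le_mul_of_nonneg_left (le_of_lt hu) hγhat_pos.le))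
    rw [h0, le_zero_iff, mul_eq_zero] at hlb
    rcases hlb with h | h
    · exact absurd (ENNReal.ofReal_eq_zero.1 h) (Real.exp_pos _).not_ge
    · exact hF0 x h
  -- decomposition of the numerator of the left-hand side
  set ρ : ℝ → ℝ≥0∞ := fun r => ∑' k : ℕ, P (τ ⁻¹' {k}) * Fp k (Set.Ioi r) with hρ_def
  set Tτ : ℝ → ℝ≥0∞ :=
    fun x => ∑' k : ℕ, P (τ ⁻¹' {k}) * ∫⁻ u in Ioi x, E u ∂(Fp k) with hTτ_def
  have hτfk : ∀ k : ℕ, (fun ω => (τ ω : ℝ)) ⁻¹' {(k:ℝ)} = τ ⁻¹' {k} := by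
    intro k; ext ω; simp [Nat.cast_inj]
  have hLHSnum : ∀ x : ℝ, P {ω | (∑ i ∈ Finset.range (τ ω), ξ i ω) > x} = ρ x := by
    intro x
    have hset : {ω | (∑ i ∈ Finset.range (τ ω), ξ i ω) > x}
        = ⋃ k : ℕ, (τ ⁻¹' {k} ∩ S k ⁻¹' Set.Ioi x) := by
      ext ω
      simp only [mem_setOf_eq, mem_iUnion, mem_inter_iff, mem_preimage, mem_singleton_iff,
        mem_Ioi]
      constructor
      · intro h; exact ⟨τ ω, rfl, h⟩
      · rintro ⟨k, hk, h⟩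
        subst hk
        exact h
    rw [hset, measure_iUnion
      (fun i j hij => Disjoint.mono inter_subset_left inter_subset_left
        (Disjoint.preimage τ (by simpa using hij)))
      (fun k => (hτmeas (measurableSet_singleton k)).inter ((hSmeas k) measurableSet_Ioi))]
    refine tsum_congr fun k => ?_
    have h := (hindepSτ k).measure_inter_preimage_eq_mul (Set.Ioi x) {(k:ℝ)}
      measurableSet_Ioi (measurableSet_singleton _)
    rw [hτfk k] at h
    rw [inter_comm, h, mul_comm]
    congr 1
    rw [hFp_def]
    exact (Measure.map_apply (hSmeas k) measurableSet_Ioi).symm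
  -- the numerator of the right-hand side
  have hNum : ∀ x : ℝ, (∑' k : ℕ, Pν {k} * Gpow k (Set.Ioi x)) = c⁻¹ * Tτ x := by
    intro x
    rw [hTτ_def]
    rw [← ENNReal.tsum_mul_left]
    refine tsum_congr fun k => ?_
    rw [hPνk k, hGpowIoi k x]
    have hcancel : φhat ^ k * (φhat⁻¹) ^ k = 1 := by
      rw [← mul_pow, ENNReal.mul_inv_cancel hφ0 hφtop, one_pow]
    calc c⁻¹ * (φhat ^ k * P (τ ⁻¹' {k})) * ((φhat⁻¹) ^ k * ∫⁻ u in Ioi x, E u ∂(Fp k))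
        = (φhat ^ k * (φhat⁻¹) ^ k)
            * (c⁻¹ * (P (τ ⁻¹' {k}) * ∫⁻ u in Ioi x, E u ∂(Fp k))) := by ring
      _ = c⁻¹ * (P (τ ⁻¹' {k}) * ∫⁻ u in Ioi x, E u ∂(Fp k)) := by rw [hcancel, one_mul]
  -- ratio identity
  have hgK : ∀ x : ℝ, (∑' k : ℕ, Pν {k} * Gpow k (Set.Ioi x)) / G (Set.Ioi x)
      = K * ((Tτ x) / ∫⁻ u in Ioi x, E u ∂F) := by
    intro x
    rw [hNum x, hGIoi x, div_eq_mul_inv, div_eq_mul_inv,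
      ENNReal.mul_inv (Or.inl (ENNReal.inv_ne_zero.2 hφtop))
        (Or.inl (ENNReal.inv_ne_top.2 hφ0)), inv_inv, hK_def]
    ring
  -- layer cake representation
  have hanti : ∀ μ' : Measure ℝ, Measurable fun r : ℝ => μ' (Set.Ioi r) :=
    fun μ' => Antitone.measurable fun r r' hrr => measure_mono (Ioi_subset_Ioi hrr)
  have hmax_meas : ∀ x : ℝ, Measurable fun t : ℝ => max (Real.log t / γhat) x :=
    fun x => (Real.measurable_log.div_const _).max measurable_const
  have hTτ_layer : ∀ x : ℝ,
      Tτ x = ∫⁻ t in Ioi (0:ℝ), ρ (max (Real.log t / γhat) x) := by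
    intro x
    rw [hTτ_def]
    have h1 : ∀ k : ℕ, P (τ ⁻¹' {k}) * ∫⁻ u in Ioi x, E u ∂(Fp k)
        = ∫⁻ t in Ioi (0:ℝ), P (τ ⁻¹' {k}) * Fp k (Set.Ioi (max (Real.log t / γhat) x)) := by
      intro k
      simp only [hE_def]
      rw [my_tilt_tail γhat hγhat_pos (Fp k) x,
        lintegral_const_mul' _ _ (measure_ne_top P _)]
    simp only [h1]
    rw [← lintegral_tsum
      (f := fun (k : ℕ) (t : ℝ) => P (τ ⁻¹' {k}) * Fp k (Set.Ioi (max (Real.log t / γhat) x)))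
      (fun k => (((hanti (Fp k)).comp (hmax_meas x)).const_mul _).aemeasurable)]
  have hTF_layer : ∀ x : ℝ,
      (∫⁻ u in Ioi x, E u ∂F) = ∫⁻ t in Ioi (0:ℝ), F (Set.Ioi (max (Real.log t / γhat) x)) := by
    intro x
    simp only [hE_def]
    exact my_tilt_tail γhat hγhat_pos F x
  -- the key liminf bound
  set L : ℝ≥0∞ := Filter.liminf (fun x : ℝ =>
      P {ω | (∑ i ∈ Finset.range (τ ω), ξ i ω) > x} / P {ω | ξ 0 ω > x}) atTop with hL_def
  have key : ∀ cc : ℝ≥0∞, cc < L → K * cc ≤ Filter.liminf (fun x : ℝ =>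
      (∑' k : ℕ, Pν {k} * Gpow k (Set.Ioi x)) / G (Set.Ioi x)) atTop := by
    intro cc hcc
    have hcctop : cc ≠ ⊤ := hcc.ne_top
    have hev : ∀ᶠ x : ℝ in atTop, cc <
        P {ω | (∑ i ∈ Finset.range (τ ω), ξ i ω) > x} / P {ω | ξ 0 ω > x} :=
      eventually_lt_of_lt_liminf hcc
    obtain ⟨x₀, hx₀⟩ := eventually_atTop.1 hev
    have hbound : ∀ y : ℝ, x₀ ≤ y → cc * F (Set.Ioi y) ≤ ρ y := by
      intro y hy
      have h := (hx₀ y hy).le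
      rw [hLHSnum y, hFden y] at h
      exact (ENNReal.le_div_iff_mul_le (Or.inl (hF0 y))
        (Or.inl (measure_ne_top F _))).1 h
    have hT : ∀ x : ℝ, x₀ ≤ x → cc * (∫⁻ u in Ioi x, E u ∂F) ≤ Tτ x := by
      intro x hx
      rw [hTτ_layer x, hTF_layer x, ← lintegral_const_mul' _ _ hcctop]
      refine lintegral_mono fun t => ?_
      exact hbound _ (le_trans hx (le_max_right _ _))
    have hev2 : ∀ᶠ x : ℝ in atTop, K * cc ≤
        (∑' k : ℕ, Pν {k} * Gpow k (Set.Ioi x)) / G (Set.Ioi x) := by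
      filter_upwards [eventually_ge_atTop x₀] with x hx
      rw [hgK x]
      refine mul_le_mul_right ?_ K
      exact (ENNReal.le_div_iff_mul_le (Or.inl (hTF_pos x))
        (Or.inl (hTF_netop x))).2 (hT x hx)
    exact le_liminf_of_le (by isBoundedDefault) hev2
  -- conclude `K * L ≤ liminf`
  have hKL : K * L ≤ Filter.liminf (fun x : ℝ =>
      (∑' k : ℕ, Pν {k} * Gpow k (Set.Ioi x)) / G (Set.Ioi x)) atTop := by
    by_contra hcon
    push_neg at hcon
    set M : ℝ≥0∞ := Filter.liminf (fun x : ℝ =>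
      (∑' k : ℕ, Pν {k} * Gpow k (Set.Ioi x)) / G (Set.Ioi x)) atTop with hM_def
    have h1 : K⁻¹ * M < L := by
      refine lt_of_not_ge fun hle => absurd ?_ hcon.not_ge
      calc K * L ≤ K * (K⁻¹ * M) := mul_le_mul_right hle K
        _ = (K * K⁻¹) * M := (mul_assoc K K⁻¹ M).symm
        _ = M := by rw [ENNReal.mul_inv_cancel hK0 hKtop, one_mul]
    obtain ⟨cc, hgt, hlt⟩ := exists_between h1
    have h2 := key cc hlt
    have h3 : M < K * cc := by
      calc M = K * (K⁻¹ * M) := by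
            rw [← mul_assoc, ENNReal.mul_inv_cancel hK0 hKtop, one_mul]
        _ < K * cc := ENNReal.mul_lt_mul_right hK0 hKtop hgt
    exact absurd h2 h3.not_ge
  -- compare the constants
  have hA : (∫⁻ ω, φhat ^ (τ ω - 1) ∂P)⁻¹ ≤ K := by
    have hle : φhat⁻¹ * c ≤ ∫⁻ ω, φhat ^ (τ ω - 1) ∂P := by
      rw [hc_def, ← lintegral_const_mul' _ _ (ENNReal.inv_ne_top.2 hφ0)]
      refine lintegral_mono fun ω => ?_
      cases hτω : τ ω with
      | zero =>
        simp only [pow_zero, mul_one, Nat.zero_sub, pow_zero]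
        exact ENNReal.inv_le_one.2 hφhat_gt_one.le
      | succ n =>
        simp only [Nat.succ_sub_one]
        rw [pow_succ, ← mul_assoc, mul_comm φhat⁻¹ (φhat ^ n), mul_assoc,
          ENNReal.inv_mul_cancel hφ0 hφtop, mul_one]
    calc (∫⁻ ω, φhat ^ (τ ω - 1) ∂P)⁻¹ ≤ (φhat⁻¹ * c)⁻¹ := ENNReal.inv_le_inv' hle
      _ = K := by
        rw [ENNReal.mul_inv (Or.inl (ENNReal.inv_ne_zero.2 hφtop))
          (Or.inl (ENNReal.inv_ne_top.2 hφ0)), inv_inv, hK_def]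
  calc (∫⁻ ω, φhat ^ (τ ω - 1) ∂P)⁻¹ * L ≤ K * L := mul_le_mul_left hA L
    _ ≤ _ := hKL
end
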